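/- If every connected component of a finite simple graph G is a clique-star, and H is a pivot-minor of G, then every connected component of H is a clique-star. -/

import Mathlib

/-!  Basic notions: local complementation, edge pivot, pivot-equivalence, pivot-minors. -/

variable {V : Type*} {W : Type*}

/-- Local complementation at a vertex `u`: complement the adjacency inside the
neighbourhood of `u`. -/
def localComp (G : SimpleGraph V) (u : V) : SimpleGraph V where
  Adj x y := x ≠ y ∧
    ((G.Adj u x ∧ G.Adj u y ∧ ¬ G.Adj x y) ∨ (¬ (G.Adj u x ∧ G.Adj u y) ∧ G.Adj x y))
  symm := by
    constructor
    intro x y h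
    obtain ⟨hne, h⟩ := h
    refine ⟨hne.symm, ?_⟩
    rw [G.adj_comm y x]
    tauto
  loopless := by
    constructor
    intro x h
    exact h.1 rfl

/-- The edge pivot `G ∧ uv = ((G * u) * v) * u`. -/
def pivotEdge (G : SimpleGraph V) (u v : V) : SimpleGraph V :=
  localComp (localComp (localComp G u) v) u

/-- One pivot step: pivoting along an edge of the graph. -/
def PivotStep (G G' : SimpleGraph V) : Prop :=
  ∃ u v, G.Adj u v ∧ G' = pivotEdge G u v

/-- Two graphs on the same vertex set are pivot-equivalent if one can be obtained
from the other by a sequence of edge pivots. -/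
def PivotEquiv (G G' : SimpleGraph V) : Prop :=
  Relation.ReflTransGen PivotStep G G'

/-- `H` is a pivot-minor of `G` on the vertex subset `s`: `H` is obtained (up to
isomorphism) from `G` by a sequence of edge pivots and deletions of the vertices
outside `s`.  Since pivoting an edge commutes with deleting a vertex not on that
edge, this is equivalent to performing all the edge pivots first and then deleting
the vertices outside `s`, which is how we state it. -/
def HasPivotMinorOn (G : SimpleGraph V) (s : Set V) (H : SimpleGraph W) : Prop :=
  ∃ G' : SimpleGraph V, PivotEquiv G G' ∧ Nonempty ((G'.induce s) ≃g H)

/-- `G` contains a pivot-minor isomorphic to `H`. -/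
def HasPivotMinor (G : SimpleGraph V) (H : SimpleGraph W) : Prop :=
  ∃ s : Set V, HasPivotMinorOn G s H

/-- `G'` is a result of contracting the vertex `v` in `G` (denoted `G/v`):
if `v` is isolated this is `G - v`, and otherwise it is `(G ∧ zv) - v`
for some neighbour `z` of `v` (well defined up to pivot-equivalence). -/
def IsContraction (G : SimpleGraph V) (v : V) (G' : SimpleGraph ↥{u : V | u ≠ v}) : Prop :=
  ((∀ z, ¬ G.Adj v z) ∧ G' = G.induce {u : V | u ≠ v}) ∨
    (∃ z, G.Adj v z ∧ G' = (pivotEdge G z v).induce {u : V | u ≠ v})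

/-- `G` is `H`-pivot-unique: `G` contains a pivot-minor isomorphic to `H` and for
every vertex `v`, at most one of `G - v` and `G / v` contains a pivot-minor
isomorphic to `H`. -/
def PivotUnique (G : SimpleGraph V) (H : SimpleGraph W) : Prop :=
  HasPivotMinor G H ∧
    ∀ v : V, ¬ (HasPivotMinor (G.induce {u : V | u ≠ v}) H ∧
      ∃ G' : SimpleGraph ↥{u : V | u ≠ v}, IsContraction G v G' ∧ HasPivotMinor G' H)

/-- `G` contains an induced subgraph isomorphic to `H`. -/
def HasInducedSubgraphIso (G : SimpleGraph V) (H : SimpleGraph W) : Prop :=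
  ∃ s : Set V, Nonempty ((G.induce s) ≃g H)

/-- A graph is a clique-star if it is a complete graph, or its vertex set can be
partitioned into pairwise disjoint nonempty cliques `K, L₁, …, L_p` (`p ≥ 1`) such
that every vertex of `K` is adjacent to every vertex of `L₁ ∪ ⋯ ∪ L_p` and there
are no edges between distinct cliques `Lᵢ` and `Lⱼ`. -/
def IsCliqueStar {V : Type*} (G : SimpleGraph V) : Prop :=
  G = ⊤ ∨
    ∃ (K : Set V) (Ls : Set (Set V)),
      K.Nonempty ∧ Ls.Nonempty ∧ (∀ L ∈ Ls, L.Nonempty) ∧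
      K ∪ ⋃₀ Ls = Set.univ ∧
      (∀ L ∈ Ls, Disjoint K L) ∧
      (∀ L₁ ∈ Ls, ∀ L₂ ∈ Ls, L₁ ≠ L₂ → Disjoint L₁ L₂) ∧
      G.IsClique K ∧ (∀ L ∈ Ls, G.IsClique L) ∧
      (∀ x ∈ K, ∀ y ∈ ⋃₀ Ls, G.Adj x y) ∧
      (∀ L₁ ∈ Ls, ∀ L₂ ∈ Ls, L₁ ≠ L₂ → ∀ x ∈ L₁, ∀ y ∈ L₂, ¬ G.Adj x y)

lemma localComp_adj (G : SimpleGraph V) (u x y : V) :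
    (localComp G u).Adj x y ↔ x ≠ y ∧ Xor' (G.Adj x y) (G.Adj u x ∧ G.Adj u y) := by
  simp only [localComp, Xor', Xor]
  tauto

lemma pivotEdge_adj (G : SimpleGraph V) {u v : V} (huv : G.Adj u v) {x y : V}
    (hxu : x ≠ u) (hxv : x ≠ v) (hyu : y ≠ u) (hyv : y ≠ v) :
    (pivotEdge G u v).Adj x y ↔ x ≠ y ∧
      Xor' (G.Adj x y) (Xor' (G.Adj u x ∧ G.Adj u y) (Xor' (G.Adj v x ∧ G.Adj v y)
        (Xor' (G.Adj u x) (G.Adj v x) ∧ Xor' (G.Adj u y) (G.Adj v y)))) := by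
  have h1 : ¬ G.Adj u u := G.irrefl
  have h2 : ¬ G.Adj v v := G.irrefl
  have hcu : G.Adj v u := huv.symm
  have hne : u ≠ v := huv.ne
  by_cases a1 : G.Adj u x <;> by_cases a2 : G.Adj u y <;> by_cases a3 : G.Adj v x <;>
    by_cases a4 : G.Adj v y <;> by_cases a5 : G.Adj x y <;>
  · simp only [pivotEdge, localComp_adj, Xor']
    simp_all [G.adj_comm x u, G.adj_comm x v, G.adj_comm y u, G.adj_comm y v, G.adj_comm v u,
      hxu.symm, hxv.symm, hyu.symm, hyv.symm, hne.symm, G.adj_comm y x]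

lemma pivotEdge_adj_left (G : SimpleGraph V) {u v : V} (huv : G.Adj u v) {y : V}
    (hyu : y ≠ u) (hyv : y ≠ v) :
    (pivotEdge G u v).Adj u y ↔ G.Adj v y := by
  have h1 : ¬ G.Adj u u := G.irrefl
  have h2 : ¬ G.Adj v v := G.irrefl
  have hcu : G.Adj v u := huv.symm
  have hne : u ≠ v := huv.ne
  by_cases a2 : G.Adj u y <;> by_cases a4 : G.Adj v y <;>
  · simp only [pivotEdge, localComp_adj, Xor']
    simp_all [G.adj_comm y u, G.adj_comm y v, G.adj_comm v u, hyu.symm, hyv.symm, hne.symm]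

lemma pivotEdge_adj_right (G : SimpleGraph V) {u v : V} (huv : G.Adj u v) {y : V}
    (hyu : y ≠ u) (hyv : y ≠ v) :
    (pivotEdge G u v).Adj v y ↔ G.Adj u y := by
  have h1 : ¬ G.Adj u u := G.irrefl
  have h2 : ¬ G.Adj v v := G.irrefl
  have hcu : G.Adj v u := huv.symm
  have hne : u ≠ v := huv.ne
  by_cases a2 : G.Adj u y <;> by_cases a4 : G.Adj v y <;>
  · simp only [pivotEdge, localComp_adj, Xor']
    simp_all [G.adj_comm y u, G.adj_comm y v, G.adj_comm v u, hyu.symm, hyv.symm, hne.symm]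

lemma pivotEdge_adj_uv (G : SimpleGraph V) {u v : V} (huv : G.Adj u v) :
    (pivotEdge G u v).Adj u v := by
  have h1 : ¬ G.Adj u u := G.irrefl
  have h2 : ¬ G.Adj v v := G.irrefl
  have hcu : G.Adj v u := huv.symm
  have hne : u ≠ v := huv.ne
  simp only [pivotEdge, localComp_adj, Xor']
  simp_all [G.adj_comm v u, hne.symm]

section Corollaries
variable {G : SimpleGraph V} {u v x y : V}

lemma pivotEdge_adj_eq (huv : G.Adj u v) (hxu : x ≠ u) (hxv : x ≠ v) (hyu : y ≠ u) (hyv : y ≠ v)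
    (h1 : G.Adj u x ↔ G.Adj v x) (h2 : G.Adj u y ↔ G.Adj v y) :
    (pivotEdge G u v).Adj x y ↔ G.Adj x y := by
  by_cases hxy : x = y
  · subst hxy; simp
  rw [pivotEdge_adj G huv hxu hxv hyu hyv]
  by_cases a1 : G.Adj u x <;> by_cases a2 : G.Adj u y <;> by_cases a3 : G.Adj x y <;>
    simp_all [Xor']

lemma pivotEdge_adj_eq' (huv : G.Adj u v) (hxu : x ≠ u) (hxv : x ≠ v) (hyu : y ≠ u) (hyv : y ≠ v)
    (h1 : G.Adj u x ↔ G.Adj u y) (h2 : G.Adj v x ↔ G.Adj v y) :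
    (pivotEdge G u v).Adj x y ↔ G.Adj x y := by
  by_cases hxy : x = y
  · subst hxy; simp
  rw [pivotEdge_adj G huv hxu hxv hyu hyv]
  by_cases a1 : G.Adj u x <;> by_cases a2 : G.Adj v x <;> by_cases a3 : G.Adj x y <;>
    simp_all [Xor']

lemma pivotEdge_adj_toggle (huv : G.Adj u v) (hxu : x ≠ u) (hxv : x ≠ v) (hyu : y ≠ u) (hyv : y ≠ v)
    (h1 : G.Adj u x) (h2 : G.Adj u y) (h3 : ¬ (G.Adj v x ↔ G.Adj v y)) :
    (pivotEdge G u v).Adj x y ↔ (x ≠ y ∧ ¬ G.Adj x y) := by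
  by_cases hxy : x = y
  · subst hxy; simp
  rw [pivotEdge_adj G huv hxu hxv hyu hyv]
  by_cases a1 : G.Adj v x <;> by_cases a2 : G.Adj v y <;> by_cases a3 : G.Adj x y <;>
    simp_all [Xor']

lemma pivotEdge_comm (huv : G.Adj u v) : pivotEdge G u v = pivotEdge G v u := by
  have hvu : G.Adj v u := huv.symm
  have hne : u ≠ v := huv.ne
  have key : ∀ x y : V, x ≠ u → x ≠ v → y ≠ u → y ≠ v →
      ((pivotEdge G u v).Adj x y ↔ (pivotEdge G v u).Adj x y) := by
    intro x y hxu hxv hyu hyv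
    by_cases hxy : x = y
    · subst hxy; simp
    rw [pivotEdge_adj G huv hxu hxv hyu hyv, pivotEdge_adj G hvu hxv hxu hyv hyu]
    by_cases a1 : G.Adj u x <;> by_cases a2 : G.Adj u y <;> by_cases a3 : G.Adj v x <;>
      by_cases a4 : G.Adj v y <;> by_cases a5 : G.Adj x y <;> simp_all [Xor']
  have bd : ∀ y : V, y ≠ u → y ≠ v →
      (((pivotEdge G u v).Adj u y ↔ (pivotEdge G v u).Adj u y) ∧
       ((pivotEdge G u v).Adj v y ↔ (pivotEdge G v u).Adj v y)) := by
    intro y hyu hyv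
    constructor
    · rw [pivotEdge_adj_left G huv hyu hyv, pivotEdge_adj_right G hvu hyv hyu]
    · rw [pivotEdge_adj_right G huv hyu hyv, pivotEdge_adj_left G hvu hyv hyu]
  ext x y
  by_cases hxu : x = u <;> by_cases hxv : x = v <;> by_cases hyu : y = u <;> by_cases hyv : y = v
  · exact absurd (hxu.symm.trans hxv) hne
  · exact absurd (hxu.symm.trans hxv) hne
  · exact absurd (hxu.symm.trans hxv) hne
  · exact absurd (hxu.symm.trans hxv) hne
  · exact absurd (hyu.symm.trans hyv) hne
  · simp [hxu, hyu]
  · rw [hxu, hyv]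
    exact iff_of_true (pivotEdge_adj_uv G huv) ((pivotEdge_adj_uv G hvu).symm)
  · rw [hxu]; exact (bd y hyu hyv).1
  · exact absurd (hyu.symm.trans hyv) hne
  · rw [hxv, hyu]
    exact iff_of_true ((pivotEdge_adj_uv G huv).symm) (pivotEdge_adj_uv G hvu)
  · simp [hxv, hyv]
  · rw [hxv]; exact (bd y hyu hyv).2
  · exact absurd (hyu.symm.trans hyv) hne
  · rw [hyu, (pivotEdge G u v).adj_comm, (pivotEdge G v u).adj_comm]
    exact (bd x hxu hxv).1
  · rw [hyv, (pivotEdge G u v).adj_comm, (pivotEdge G v u).adj_comm]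
    exact (bd x hxu hxv).2
  · exact key x y hxu hxv hyu hyv

end Corollaries

section Reach
variable {G : SimpleGraph V} {u v : V}

private lemma toggle_mem (huv : G.Adj u v) {x y : V}
    (hxu : x ≠ u) (hxv : x ≠ v) (hyu : y ≠ u) (hyv : y ≠ v)
    (h : Xor' (G.Adj u x ∧ G.Adj u y) (Xor' (G.Adj v x ∧ G.Adj v y)
        (Xor' (G.Adj u x) (G.Adj v x) ∧ Xor' (G.Adj u y) (G.Adj v y)))) :
    (G.Adj u x ∨ G.Adj v x) ∧ (G.Adj u y ∨ G.Adj v y) := by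
  by_cases a1 : G.Adj u x <;> by_cases a2 : G.Adj u y <;> by_cases a3 : G.Adj v x <;>
    by_cases a4 : G.Adj v y <;> simp_all [Xor']

private lemma reach_uv_of_mem {x : V} (huv : G.Adj u v) (h : G.Adj u x ∨ G.Adj v x) :
    G.Reachable u x := by
  rcases h with h | h
  · exact h.reachable
  · exact huv.reachable.trans h.reachable

lemma reachable_of_pivot_adj (huv : G.Adj u v) {x y : V}
    (h : (pivotEdge G u v).Adj x y) : G.Reachable x y := by
  have main : ∀ a b : V, a ≠ u → a ≠ v → b ≠ u → b ≠ v →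
      (pivotEdge G u v).Adj a b → G.Reachable a b := by
    intro a b hau hav hbu hbv hab
    rw [pivotEdge_adj G huv hau hav hbu hbv] at hab
    obtain ⟨hne, hx⟩ := hab
    by_cases hGab : G.Adj a b
    · exact hGab.reachable
    · have hT : Xor' (G.Adj u a ∧ G.Adj u b) (Xor' (G.Adj v a ∧ G.Adj v b)
          (Xor' (G.Adj u a) (G.Adj v a) ∧ Xor' (G.Adj u b) (G.Adj v b))) := by
        rcases hx with ⟨h1, h2⟩ | ⟨h1, h2⟩
        · exact absurd h1 (by simpa using hGab)
        · exact h1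
      obtain ⟨ha, hb⟩ := toggle_mem huv hau hav hbu hbv hT
      exact (reach_uv_of_mem huv ha).symm.trans (reach_uv_of_mem huv hb)
  by_cases hxu : u = x
  · subst hxu
    by_cases hyv : v = y
    · subst hyv; exact huv.reachable
    by_cases hyu : u = y
    · subst hyu; exact absurd h (SimpleGraph.irrefl _)
    · rw [pivotEdge_adj_left G huv (fun hh => hyu hh.symm) (fun hh => hyv hh.symm)] at h
      exact huv.reachable.trans h.reachable
  by_cases hxv : v = x
  · subst hxv
    by_cases hyu : u = y
    · subst hyu; exact huv.symm.reachable
    by_cases hyv : v = y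
    · subst hyv; exact absurd h (SimpleGraph.irrefl _)
    · rw [pivotEdge_adj_right G huv (fun hh => hyu hh.symm) (fun hh => hyv hh.symm)] at h
      exact huv.symm.reachable.trans h.reachable
  by_cases hyu : u = y
  · subst hyu
    rw [(pivotEdge G u v).adj_comm] at h
    by_cases hxv2 : v = x
    · subst hxv2; exact huv.reachable.symm
    · rw [pivotEdge_adj_left G huv (fun hh => hxu hh.symm) (fun hh => hxv2 hh.symm)] at h
      exact (huv.reachable.trans h.reachable).symm
  by_cases hyv : v = y
  · subst hyv
    rw [(pivotEdge G u v).adj_comm] at h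
    rw [pivotEdge_adj_right G huv (fun hh => hxu hh.symm) (fun hh => hxv hh.symm)] at h
    exact (huv.symm.reachable.trans h.reachable).symm
  · exact main x y (fun hh => hxu hh.symm) (fun hh => hxv hh.symm)
      (fun hh => hyu hh.symm) (fun hh => hyv hh.symm) h

lemma pivot_reachable_of_adj (huv : G.Adj u v) {x y : V}
    (h : G.Adj x y) : (pivotEdge G u v).Reachable x y := by
  set H := pivotEdge G u v with hH
  have huv' : H.Adj u v := pivotEdge_adj_uv G huv
  have reachu : ∀ a : V, a ≠ u → a ≠ v → (G.Adj u a ∨ G.Adj v a) → H.Reachable u a := by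
    intro a hau hav ha
    rcases ha with ha | ha
    · have : H.Adj v a := by rw [hH, pivotEdge_adj_right G huv hau hav]; exact ha
      exact huv'.reachable.trans this.reachable
    · have : H.Adj u a := by rw [hH, pivotEdge_adj_left G huv hau hav]; exact ha
      exact this.reachable
  have main : ∀ a b : V, a ≠ u → a ≠ v → b ≠ u → b ≠ v → G.Adj a b → H.Reachable a b := by
    intro a b hau hav hbu hbv hab
    by_cases hH2 : H.Adj a b
    · exact hH2.reachable
    · rw [hH, pivotEdge_adj G huv hau hav hbu hbv] at hH2
      have hT : Xor' (G.Adj u a ∧ G.Adj u b) (Xor' (G.Adj v a ∧ G.Adj v b)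
          (Xor' (G.Adj u a) (G.Adj v a) ∧ Xor' (G.Adj u b) (G.Adj v b))) := by
        by_contra hT
        exact hH2 ⟨hab.ne, Or.inl ⟨hab, hT⟩⟩
      obtain ⟨ha, hb⟩ := toggle_mem huv hau hav hbu hbv hT
      exact (reachu a hau hav ha).symm.trans (reachu b hbu hbv hb)
  by_cases hxu : u = x
  · subst hxu
    by_cases hyv : v = y
    · subst hyv; exact huv'.reachable
    · exact reachu y h.ne' (fun hh => hyv hh.symm) (Or.inl h)
  by_cases hxv : v = x
  · subst hxv
    by_cases hyu : u = y
    · subst hyu; exact huv'.symm.reachable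
    · exact huv'.symm.reachable.trans (reachu y (fun hh => hyu hh.symm) h.ne' (Or.inr h))
  by_cases hyu : u = y
  · subst hyu
    exact (reachu x (fun hh => hxu hh.symm) (fun hh => hxv hh.symm) (Or.inl h.symm)).symm
  by_cases hyv : v = y
  · subst hyv
    exact ((reachu x (fun hh => hxu hh.symm) (fun hh => hxv hh.symm)
      (Or.inr h.symm)).symm).trans huv'.reachable
  · exact main x y (fun hh => hxu hh.symm) (fun hh => hxv hh.symm)
      (fun hh => hyu hh.symm) (fun hh => hyv hh.symm) h

lemma reachable_mono_of_adj {G₁ G₂ : SimpleGraph V}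
    (h : ∀ a b : V, G₁.Adj a b → G₂.Reachable a b) {x y : V}
    (hr : G₁.Reachable x y) : G₂.Reachable x y := by
  obtain ⟨w⟩ := hr
  induction w with
  | nil => exact SimpleGraph.Reachable.refl _
  | cons ha _ ih => exact (h _ _ ha).trans ih

lemma pivot_reachable_iff (huv : G.Adj u v) (x y : V) :
    (pivotEdge G u v).Reachable x y ↔ G.Reachable x y := by
  constructor
  · exact reachable_mono_of_adj (fun a b hab => reachable_of_pivot_adj huv hab)
  · exact reachable_mono_of_adj (fun a b hab => pivot_reachable_of_adj huv hab)

lemma supp_corr {G₁ G₂ : SimpleGraph V} (h : ∀ x y : V, G₁.Reachable x y ↔ G₂.Reachable x y)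
    (c : G₁.ConnectedComponent) : ∃ c₂ : G₂.ConnectedComponent, c.supp = c₂.supp := by
  obtain ⟨x, rfl⟩ := c.exists_rep
  refine ⟨G₂.connectedComponentMk x, ?_⟩
  ext y
  simp only [SimpleGraph.ConnectedComponent.mem_supp_iff]
  constructor
  · exact fun hr => SimpleGraph.ConnectedComponent.eq.mpr
      ((h y x).mp (SimpleGraph.ConnectedComponent.eq.mp hr))
  · exact fun hr => SimpleGraph.ConnectedComponent.eq.mpr
      ((h y x).mpr (SimpleGraph.ConnectedComponent.eq.mp hr))

end Reach

/-- Clique-star structure on a subset `s` of the vertex set, phrased with plain sets. -/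
def CSOn (G : SimpleGraph V) (s : Set V) : Prop :=
  (∀ x ∈ s, ∀ y ∈ s, x ≠ y → G.Adj x y) ∨
  ∃ (K : Set V) (Ls : Set (Set V)),
    K.Nonempty ∧ Ls.Nonempty ∧ (∀ L ∈ Ls, L.Nonempty) ∧
    K ∪ ⋃₀ Ls = s ∧
    (∀ L ∈ Ls, Disjoint K L) ∧
    (∀ L₁ ∈ Ls, ∀ L₂ ∈ Ls, L₁ ≠ L₂ → Disjoint L₁ L₂) ∧
    (∀ x ∈ K, ∀ y ∈ K, x ≠ y → G.Adj x y) ∧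
    (∀ L ∈ Ls, ∀ x ∈ L, ∀ y ∈ L, x ≠ y → G.Adj x y) ∧
    (∀ x ∈ K, ∀ y ∈ ⋃₀ Ls, G.Adj x y) ∧
    (∀ L₁ ∈ Ls, ∀ L₂ ∈ Ls, L₁ ≠ L₂ → ∀ x ∈ L₁, ∀ y ∈ L₂, ¬ G.Adj x y)

lemma isCliqueStar_iff_CSOn_univ (G : SimpleGraph V) :
    IsCliqueStar G ↔ CSOn G Set.univ := by
  constructor
  · rintro (rfl | ⟨K, Ls, h1, h2, h3, h4, h5, h6, h7, h8, h9, h10⟩)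
    · exact Or.inl (fun x _ y _ hxy => by simpa using hxy)
    · refine Or.inr ⟨K, Ls, h1, h2, h3, h4, h5, h6, ?_, ?_, h9, h10⟩
      · exact fun x hx y hy hxy => h7 hx hy hxy
      · exact fun L hL x hx y hy hxy => (h8 L hL) hx hy hxy
  · rintro (h | ⟨K, Ls, h1, h2, h3, h4, h5, h6, h7, h8, h9, h10⟩)
    · left
      ext x y
      simp only [SimpleGraph.top_adj]
      exact ⟨fun ha => ha.ne, fun hne => h x (Set.mem_univ x) y (Set.mem_univ y) hne⟩
    · refine Or.inr ⟨K, Ls, h1, h2, h3, h4, h5, h6, ?_, ?_, h9, h10⟩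
      · exact fun x hx y hy hxy => h7 x hx y hy hxy
      · exact fun L hL x hx y hy hxy => h8 L hL x hx y hy hxy

/-- Transfer of `CSOn` along an injective map which preserves and reflects adjacency. -/
lemma CSOn_map {W : Type*} {G : SimpleGraph V} {H : SimpleGraph W} {f : W → V}
    (hf : Function.Injective f) (hAdj : ∀ x y : W, H.Adj x y ↔ G.Adj (f x) (f y))
    (A : Set W) : CSOn H A ↔ CSOn G (f '' A) := by
  constructor
  · rintro (h | ⟨K, Ls, h1, h2, h3, h4, h5, h6, h7, h8, h9, h10⟩)
    · left
      rintro x ⟨a, ha, rfl⟩ y ⟨b, hb, rfl⟩ hxy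
      exact (hAdj a b).mp (h a ha b hb (fun hab => hxy (hab ▸ rfl)))
    · right
      refine ⟨f '' K, (fun L => f '' L) '' Ls, h1.image f, h2.image _,
        ?_, ?_, ?_, ?_, ?_, ?_, ?_, ?_⟩
      · rintro L ⟨L₀, hL₀, rfl⟩; exact (h3 L₀ hL₀).image f
      · rw [← h4, Set.image_union, Set.image_sUnion]
      · rintro L ⟨L₀, hL₀, rfl⟩
        exact (Set.disjoint_image_iff hf).mpr (h5 L₀ hL₀)
      · rintro L₁ ⟨A₁, hA₁, rfl⟩ L₂ ⟨A₂, hA₂, rfl⟩ hne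
        exact (Set.disjoint_image_iff hf).mpr (h6 A₁ hA₁ A₂ hA₂ (fun h => hne (h ▸ rfl)))
      · rintro x ⟨a, ha, rfl⟩ y ⟨b, hb, rfl⟩ hxy
        exact (hAdj a b).mp (h7 a ha b hb (fun hab => hxy (hab ▸ rfl)))
      · rintro L ⟨L₀, hL₀, rfl⟩ x ⟨a, ha, rfl⟩ y ⟨b, hb, rfl⟩ hxy
        exact (hAdj a b).mp (h8 L₀ hL₀ a ha b hb (fun hab => hxy (hab ▸ rfl)))
      · rintro x ⟨a, ha, rfl⟩ y hy
        obtain ⟨L, ⟨L₀, hL₀, rfl⟩, ⟨b, hb, rfl⟩⟩ := hy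
        exact (hAdj a b).mp (h9 a ha b ⟨L₀, hL₀, hb⟩)
      · rintro L₁ ⟨A₁, hA₁, rfl⟩ L₂ ⟨A₂, hA₂, rfl⟩ hne x ⟨a, ha, rfl⟩ y ⟨b, hb, rfl⟩ hadj
        exact h10 A₁ hA₁ A₂ hA₂ (fun h => hne (h ▸ rfl)) a ha b hb ((hAdj a b).mpr hadj)
  · rintro (h | ⟨K, Ls, h1, h2, h3, h4, h5, h6, h7, h8, h9, h10⟩)
    · left
      intro x hx y hy hxy
      exact (hAdj x y).mpr (h (f x) ⟨x, hx, rfl⟩ (f y) ⟨y, hy, rfl⟩ (fun he => hxy (hf he)))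
    · right
      have hsub : ∀ B : Set V, B ⊆ K ∪ ⋃₀ Ls → ∀ b ∈ B, ∃ a ∈ A, f a = b := by
        intro B hB b hb
        have : b ∈ f '' A := h4 ▸ hB hb
        exact this
      refine ⟨f ⁻¹' K ∩ A, (fun L => f ⁻¹' L ∩ A) '' Ls, ?_, h2.image _, ?_, ?_, ?_, ?_,
        ?_, ?_, ?_, ?_⟩
      · obtain ⟨k, hk⟩ := h1
        obtain ⟨a, ha, rfl⟩ := hsub K Set.subset_union_left k hk
        exact ⟨a, hk, ha⟩
      · rintro L ⟨L₀, hL₀, rfl⟩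
        obtain ⟨l, hl⟩ := h3 L₀ hL₀
        obtain ⟨a, ha, rfl⟩ := hsub L₀ (fun z hz => Or.inr ⟨L₀, hL₀, hz⟩) l hl
        exact ⟨a, hl, ha⟩
      · ext a
        constructor
        · rintro (⟨ha, haA⟩ | ⟨L, ⟨L₀, hL₀, rfl⟩, ⟨ha, haA⟩⟩)
          · exact haA
          · exact haA
        · intro haA
          have : f a ∈ K ∪ ⋃₀ Ls := h4 ▸ ⟨a, haA, rfl⟩
          rcases this with hfa | ⟨L₀, hL₀, hfa⟩
          · exact Or.inl ⟨hfa, haA⟩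
          · exact Or.inr ⟨f ⁻¹' L₀ ∩ A, ⟨L₀, hL₀, rfl⟩, hfa, haA⟩
      · rintro L ⟨L₀, hL₀, rfl⟩
        rw [Set.disjoint_left]
        rintro a ⟨ha, haA⟩ ⟨ha', _⟩
        exact (h5 L₀ hL₀).le_bot ⟨ha, ha'⟩
      · rintro L₁ ⟨A₁, hA₁, rfl⟩ L₂ ⟨A₂, hA₂, rfl⟩ hne
        have hAne : A₁ ≠ A₂ := fun h => hne (h ▸ rfl)
        rw [Set.disjoint_left]
        rintro a ⟨ha, haA⟩ ⟨ha', _⟩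
        exact (h6 A₁ hA₁ A₂ hA₂ hAne).le_bot ⟨ha, ha'⟩
      · rintro x ⟨hx, hxA⟩ y ⟨hy, hyA⟩ hxy
        exact (hAdj x y).mpr (h7 (f x) hx (f y) hy (fun he => hxy (hf he)))
      · rintro L ⟨L₀, hL₀, rfl⟩ x ⟨hx, hxA⟩ y ⟨hy, hyA⟩ hxy
        exact (hAdj x y).mpr (h8 L₀ hL₀ (f x) hx (f y) hy (fun he => hxy (hf he)))
      · rintro x ⟨hx, hxA⟩ y ⟨L, ⟨L₀, hL₀, rfl⟩, ⟨hy, hyA⟩⟩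
        exact (hAdj x y).mpr (h9 (f x) hx (f y) ⟨L₀, hL₀, hy⟩)
      · rintro L₁ ⟨A₁, hA₁, rfl⟩ L₂ ⟨A₂, hA₂, rfl⟩ hne x ⟨hx, hxA⟩ y ⟨hy, hyA⟩ hadj
        exact h10 A₁ hA₁ A₂ hA₂ (fun h => hne (h ▸ rfl)) (f x) hx (f y) hy
          ((hAdj x y).mp hadj)

lemma isCliqueStar_induce_iff (G : SimpleGraph V) (s : Set V) :
    IsCliqueStar (G.induce s) ↔ CSOn G s := by
  rw [isCliqueStar_iff_CSOn_univ]
  have := CSOn_map (G := G) (H := G.induce s) (f := (Subtype.val : s → V))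
    Subtype.val_injective (fun x y => Iff.rfl) Set.univ
  rw [this, Set.image_univ, Subtype.range_coe]

lemma CSOn_congr_adj {G G' : SimpleGraph V} {s : Set V}
    (h : ∀ x ∈ s, ∀ y ∈ s, (G.Adj x y ↔ G'.Adj x y)) (hcs : CSOn G s) : CSOn G' s := by
  rcases hcs with hc | ⟨K, Ls, h1, h2, h3, h4, h5, h6, h7, h8, h9, h10⟩
  · exact Or.inl (fun x hx y hy hxy => (h x hx y hy).mp (hc x hx y hy hxy))
  · have hKs : K ⊆ s := h4 ▸ Set.subset_union_left
    have hLs : ∀ L ∈ Ls, L ⊆ s := fun L hL =>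
      h4 ▸ (Set.subset_sUnion_of_mem hL).trans Set.subset_union_right
    refine Or.inr ⟨K, Ls, h1, h2, h3, h4, h5, h6, ?_, ?_, ?_, ?_⟩
    · exact fun x hx y hy hxy => (h x (hKs hx) y (hKs hy)).mp (h7 x hx y hy hxy)
    · exact fun L hL x hx y hy hxy =>
        (h x (hLs L hL hx) y (hLs L hL hy)).mp (h8 L hL x hx y hy hxy)
    · rintro x hx y hy
      obtain ⟨L, hL, hyL⟩ := hy
      exact (h x (hKs hx) y (hLs L hL hyL)).mp (h9 x hx y ⟨L, hL, hyL⟩)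
    · intro L₁ hL₁ L₂ hL₂ hne x hx y hy hadj
      exact h10 L₁ hL₁ L₂ hL₂ hne x hx y hy ((h x (hLs L₁ hL₁ hx) y (hLs L₂ hL₂ hy)).mpr hadj)

/-- Lemma D: a "connected" subset of a clique-star set is again a clique-star set. -/
lemma CSOn_subset {G : SimpleGraph V} {s t : Set V} (hcs : CSOn G s) (hts : t ⊆ s)
    (hconn : ∀ x ∈ t, ∀ y ∈ t, ∃ w : G.Walk x y, ∀ z ∈ w.support, z ∈ t) :
    CSOn G t := by
  rcases hcs with hc | ⟨K, Ls, h1, h2, h3, h4, h5, h6, h7, h8, h9, h10⟩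
  · exact Or.inl (fun x hx y hy hxy => hc x (hts hx) y (hts hy) hxy)
  · -- unique L containing a vertex
    have huniq : ∀ x, ∀ L₁ ∈ Ls, ∀ L₂ ∈ Ls, x ∈ L₁ → x ∈ L₂ → L₁ = L₂ := by
      intro x L₁ hL₁ L₂ hL₂ hx1 hx2
      by_contra hne
      exact (h6 L₁ hL₁ L₂ hL₂ hne).le_bot ⟨hx1, hx2⟩
    by_cases hK : (t ∩ K).Nonempty
    · by_cases hL : ∃ L ∈ Ls, (t ∩ L).Nonempty
      · obtain ⟨L₀, hL₀, hL₀ne⟩ := hL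
        right
        refine ⟨t ∩ K, (fun L => t ∩ L) '' {L | L ∈ Ls ∧ (t ∩ L).Nonempty},
          hK, ⟨t ∩ L₀, ⟨L₀, ⟨hL₀, hL₀ne⟩, rfl⟩⟩, ?_, ?_, ?_, ?_, ?_, ?_, ?_, ?_⟩
        · rintro L ⟨L₀', ⟨_, hne⟩, rfl⟩; exact hne
        · ext x
          constructor
          · rintro (⟨hx, _⟩ | ⟨L, ⟨L₀', hL₀', rfl⟩, ⟨hx, _⟩⟩)
            · exact hx
            · exact hx
          · intro hx
            have : x ∈ K ∪ ⋃₀ Ls := h4 ▸ hts hx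
            rcases this with hxK | ⟨L, hLmem, hxL⟩
            · exact Or.inl ⟨hx, hxK⟩
            · exact Or.inr ⟨t ∩ L, ⟨L, ⟨hLmem, ⟨x, hx, hxL⟩⟩, rfl⟩, hx, hxL⟩
        · rintro L ⟨L₀', ⟨hL₀', _⟩, rfl⟩
          exact ((h5 L₀' hL₀').mono Set.inter_subset_right Set.inter_subset_right)
        · rintro L₁ ⟨A₁, ⟨hA₁, _⟩, rfl⟩ L₂ ⟨A₂, ⟨hA₂, _⟩, rfl⟩ hne
          have : A₁ ≠ A₂ := fun h => hne (h ▸ rfl)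
          exact ((h6 A₁ hA₁ A₂ hA₂ this).mono Set.inter_subset_right Set.inter_subset_right)
        · exact fun x hx y hy hxy => h7 x hx.2 y hy.2 hxy
        · rintro L ⟨L₀', ⟨hL₀', _⟩, rfl⟩ x hx y hy hxy
          exact h8 L₀' hL₀' x hx.2 y hy.2 hxy
        · rintro x hx y ⟨L, ⟨L₀', ⟨hL₀', _⟩, rfl⟩, hy⟩
          exact h9 x hx.2 y ⟨L₀', hL₀', hy.2⟩
        · rintro L₁ ⟨A₁, ⟨hA₁, _⟩, rfl⟩ L₂ ⟨A₂, ⟨hA₂, _⟩, rfl⟩ hne x hx y hy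
          exact h10 A₁ hA₁ A₂ hA₂ (fun h => hne (h ▸ rfl)) x hx.2 y hy.2
      · -- t ⊆ K
        left
        intro x hx y hy hxy
        have hmem : ∀ z ∈ t, z ∈ K := by
          intro z hz
          have : z ∈ K ∪ ⋃₀ Ls := h4 ▸ hts hz
          rcases this with hzK | ⟨L, hLmem, hzL⟩
          · exact hzK
          · exact absurd ⟨L, hLmem, ⟨z, hz, hzL⟩⟩ hL
        exact h7 x (hmem x hx) y (hmem y hy) hxy
    · -- t ∩ K = ∅ : t is inside the L's, connectivity forces a single L
      have hmem : ∀ z ∈ t, ∃ L ∈ Ls, z ∈ L := by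
        intro z hz
        have : z ∈ K ∪ ⋃₀ Ls := h4 ▸ hts hz
        rcases this with hzK | ⟨L, hLmem, hzL⟩
        · exact absurd ⟨z, hz, hzK⟩ hK
        · exact ⟨L, hLmem, hzL⟩
      left
      intro x hx y hy hxy
      obtain ⟨L₀, hL₀, hxL₀⟩ := hmem x hx
      -- claim: y ∈ L₀
      obtain ⟨w, hw⟩ := hconn x hx y hy
      have walkclaim : ∀ (a b : V) (w : G.Walk a b), (∀ z ∈ w.support, z ∈ t) →
          a ∈ L₀ → b ∈ L₀ := by
        intro a b w
        induction w with
        | nil => exact fun _ h => h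
        | @cons p q r hpq w' ih =>
          intro hsupp hp
          have hqt : q ∈ t := hsupp q (by simp [SimpleGraph.Walk.support_cons])
          obtain ⟨L₁, hL₁, hqL₁⟩ := hmem q hqt
          have : L₁ = L₀ := by
            by_contra hne
            exact h10 L₀ hL₀ L₁ hL₁ (fun h => hne h.symm) p hp q hqL₁ hpq
          refine ih (fun z hz => hsupp z (by simp [SimpleGraph.Walk.support_cons, hz])) ?_
          exact this ▸ hqL₁
      have hyL₀ : y ∈ L₀ := walkclaim x y w hw hxL₀
      exact h8 L₀ hL₀ x hxL₀ y hyL₀ hxy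

section PivotCore
variable {G : SimpleGraph V} {s : Set V} {u v : V}

/-- If `u` and `v` have the same neighbours inside `s` (apart from each other),
then pivoting `uv` does not change adjacency inside `s`. -/
lemma pivot_adj_eq_on (huv : G.Adj u v) (hsame : ∀ w ∈ s, w ≠ u → w ≠ v → (G.Adj u w ↔ G.Adj v w)) :
    ∀ x ∈ s, ∀ y ∈ s, (G.Adj x y ↔ (pivotEdge G u v).Adj x y) := by
  intro x hx y hy
  by_cases hxu : x = u
  · rw [hxu]
    by_cases hyv : y = v
    · rw [hyv]
      exact iff_of_true huv (pivotEdge_adj_uv G huv)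
    by_cases hyu : y = u
    · rw [hyu]; simp
    · rw [pivotEdge_adj_left G huv hyu hyv]
      exact hsame y hy hyu hyv
  by_cases hxv : x = v
  · rw [hxv]
    by_cases hyu : y = u
    · rw [hyu]
      exact iff_of_true huv.symm (pivotEdge_adj_uv G huv).symm
    by_cases hyv : y = v
    · rw [hyv]; simp
    · rw [pivotEdge_adj_right G huv hyu hyv]
      exact (hsame y hy hyu hyv).symm
  by_cases hyu : y = u
  · rw [hyu, G.adj_comm, (pivotEdge G u v).adj_comm, pivotEdge_adj_left G huv hxu hxv]
    exact hsame x hx hxu hxv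
  by_cases hyv : y = v
  · rw [hyv, G.adj_comm, (pivotEdge G u v).adj_comm, pivotEdge_adj_right G huv hxu hxv]
    exact (hsame x hx hxu hxv).symm
  · exact (pivotEdge_adj_eq huv hxu hxv hyu hyv (hsame x hx hxu hxv) (hsame y hy hyu hyv)).symm

/-- Core case: `u` in the centre clique `K`, `v` in one of the leaf cliques `L₀`. -/
lemma CSOn_pivot_main {K L₀ : Set V} {Ls : Set (Set V)}
    (h1 : K.Nonempty) (h2 : Ls.Nonempty) (h3 : ∀ L ∈ Ls, L.Nonempty)
    (h4 : K ∪ ⋃₀ Ls = s)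
    (h5 : ∀ L ∈ Ls, Disjoint K L)
    (h6 : ∀ L₁ ∈ Ls, ∀ L₂ ∈ Ls, L₁ ≠ L₂ → Disjoint L₁ L₂)
    (h7 : ∀ x ∈ K, ∀ y ∈ K, x ≠ y → G.Adj x y)
    (h8 : ∀ L ∈ Ls, ∀ x ∈ L, ∀ y ∈ L, x ≠ y → G.Adj x y)
    (h9 : ∀ x ∈ K, ∀ y ∈ ⋃₀ Ls, G.Adj x y)
    (h10 : ∀ L₁ ∈ Ls, ∀ L₂ ∈ Ls, L₁ ≠ L₂ → ∀ x ∈ L₁, ∀ y ∈ L₂, ¬ G.Adj x y)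
    (hu : u ∈ K) (hL₀ : L₀ ∈ Ls) (hv : v ∈ L₀) (huv : G.Adj u v) :
    CSOn (pivotEdge G u v) s := by
  set H := pivotEdge G u v with hH
  have hKs : K ⊆ s := h4 ▸ Set.subset_union_left
  have hLsub : ∀ L ∈ Ls, L ⊆ s := fun L hL =>
    h4 ▸ (Set.subset_sUnion_of_mem hL).trans Set.subset_union_right
  -- u is not in any L, v is not in K
  have hunotL : ∀ L ∈ Ls, u ∉ L := fun L hL hmem => (h5 L hL).le_bot ⟨hu, hmem⟩
  have hvnotK : v ∉ K := fun hmem => (h5 L₀ hL₀).le_bot ⟨hmem, hv⟩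
  have hmemuniq : ∀ x, ∀ L₁ ∈ Ls, ∀ L₂ ∈ Ls, x ∈ L₁ → x ∈ L₂ → L₁ = L₂ := by
    intro x L₁ hL₁ L₂ hL₂ hx1 hx2
    by_contra hne
    exact (h6 L₁ hL₁ L₂ hL₂ hne).le_bot ⟨hx1, hx2⟩
  -- u is adjacent to everything else in s
  have hUT : ∀ w ∈ s, w ≠ u → G.Adj u w := by
    intro w hw hwu
    have : w ∈ K ∪ ⋃₀ Ls := h4 ▸ hw
    rcases this with hwK | hwL
    · exact h7 u hu w hwK (fun h => hwu h.symm)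
    · exact h9 u hu w hwL
  -- v is adjacent exactly to K and the rest of L₀
  have hVK : ∀ w ∈ K, G.Adj v w := fun w hw => (h9 w hw v ⟨L₀, hL₀, hv⟩).symm
  have hVL₀ : ∀ w ∈ L₀, w ≠ v → G.Adj v w := fun w hw hwv =>
    h8 L₀ hL₀ v hv w hw (fun h => hwv h.symm)
  have hVF : ∀ L ∈ Ls, L ≠ L₀ → ∀ w ∈ L, ¬ G.Adj v w := by
    intro L hL hne w hw hadj
    exact h10 L₀ hL₀ L hL (fun h => hne h.symm) v hv w hw hadj
  -- ne facts
  have hneLu : ∀ {w : V} {L : Set V}, L ∈ Ls → w ∈ L → w ≠ u :=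
    fun hL hw h => hunotL _ hL (h ▸ hw)
  have hneKv : ∀ {w : V}, w ∈ K → w ≠ v := fun hw h => hvnotK (h ▸ hw)
  have hneLv : ∀ {w : V} {L : Set V}, L ∈ Ls → L ≠ L₀ → w ∈ L → w ≠ v := by
    intro w L hL hne hw h
    exact hne (hmemuniq w L hL L₀ hL₀ hw (h ▸ hv))
  right
  refine ⟨L₀, insert K (Ls \ {L₀}), h3 L₀ hL₀, ⟨K, Set.mem_insert _ _⟩, ?_, ?_, ?_, ?_,
    ?_, ?_, ?_, ?_⟩
  · rintro L (rfl | ⟨hL, _⟩)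
    · exact h1
    · exact h3 L hL
  · -- union
    rw [Set.sUnion_insert, ← h4]
    ext x
    constructor
    · rintro (hx | hx | ⟨L, ⟨hL, _⟩, hx⟩)
      · exact Or.inr ⟨L₀, hL₀, hx⟩
      · exact Or.inl hx
      · exact Or.inr ⟨L, hL, hx⟩
    · rintro (hx | ⟨L, hL, hx⟩)
      · exact Or.inr (Or.inl hx)
      · by_cases hLL : L = L₀
        · exact Or.inl (hLL ▸ hx)
        · exact Or.inr (Or.inr ⟨L, ⟨hL, hLL⟩, hx⟩)
  · -- K̂ = L₀ disjoint from members
    rintro L (rfl | ⟨hL, hLne⟩)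
    · exact (h5 L₀ hL₀).symm
    · exact h6 L₀ hL₀ L hL (fun h => hLne h.symm)
  · -- pairwise disjoint members
    rintro L₁ (rfl | ⟨hL₁, hL₁ne⟩) L₂ (rfl | ⟨hL₂, hL₂ne⟩) hne
    · exact absurd rfl hne
    · exact h5 L₂ hL₂
    · exact (h5 L₁ hL₁).symm
    · exact h6 L₁ hL₁ L₂ hL₂ hne
  · -- K̂ = L₀ is a clique in H
    intro x hx y hy hxy
    by_cases hxv : x = v
    · rw [hxv]
      have hyv : y ≠ v := fun h => hxy (hxv.trans h.symm)
      rw [hH, pivotEdge_adj_right G huv (hneLu hL₀ hy) hyv]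
      exact hUT y (hLsub L₀ hL₀ hy) (hneLu hL₀ hy)
    by_cases hyv : y = v
    · rw [hyv, (pivotEdge G u v).adj_comm, pivotEdge_adj_right G huv (hneLu hL₀ hx) hxv]
      exact hUT x (hLsub L₀ hL₀ hx) (hneLu hL₀ hx)
    · rw [hH, pivotEdge_adj_eq' huv (hneLu hL₀ hx) hxv (hneLu hL₀ hy) hyv
        (iff_of_true (hUT x (hLsub L₀ hL₀ hx) (hneLu hL₀ hx))
          (hUT y (hLsub L₀ hL₀ hy) (hneLu hL₀ hy)))
        (iff_of_true (hVL₀ x hx hxv) (hVL₀ y hy hyv))]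
      exact h8 L₀ hL₀ x hx y hy hxy
  · -- each member is a clique in H
    rintro L (rfl | ⟨hL, hLne⟩) x hx y hy hxy
    · -- K is a clique in H
      by_cases hxu : x = u
      · rw [hxu]
        have hyu : y ≠ u := fun h => hxy (hxu.trans h.symm)
        rw [hH, pivotEdge_adj_left G huv hyu (hneKv hy)]
        exact hVK y hy
      by_cases hyu : y = u
      · rw [hyu, (pivotEdge G u v).adj_comm, pivotEdge_adj_left G huv hxu (hneKv hx)]
        exact hVK x hx
      · rw [hH, pivotEdge_adj_eq' huv hxu (hneKv hx) hyu (hneKv hy)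
          (iff_of_true (hUT x (hKs hx) hxu) (hUT y (hKs hy) hyu))
          (iff_of_true (hVK x hx) (hVK y hy))]
        exact h7 x hx y hy hxy
    · -- L ∈ Ls \ {L₀} is a clique in H
      have hLne' : L ≠ L₀ := by simpa using hLne
      rw [hH, pivotEdge_adj_eq' huv (hneLu hL hx) (hneLv hL hLne' hx)
          (hneLu hL hy) (hneLv hL hLne' hy)
          (iff_of_true (hUT x (hLsub L hL hx) (hneLu hL hx))
            (hUT y (hLsub L hL hy) (hneLu hL hy)))
          (iff_of_false (hVF L hL hLne' x hx) (hVF L hL hLne' y hy))]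
      exact h8 L hL x hx y hy hxy
  · -- join: every vertex of L₀ is H-adjacent to every vertex of the members
    intro x hx y hy
    rw [Set.sUnion_insert] at hy
    by_cases hxv : x = v
    · rw [hxv]
      rcases hy with hyK | ⟨L, ⟨hL, hLne⟩, hyL⟩
      · by_cases hyu : y = u
        · rw [hyu]; exact (pivotEdge_adj_uv G huv).symm
        · rw [hH, pivotEdge_adj_right G huv hyu (hneKv hyK)]
          exact hUT y (hKs hyK) hyu
      · have hLne' : L ≠ L₀ := by simpa using hLne
        rw [hH, pivotEdge_adj_right G huv (hneLu hL hyL) (hneLv hL hLne' hyL)]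
        exact hUT y (hLsub L hL hyL) (hneLu hL hyL)
    · rcases hy with hyK | ⟨L, ⟨hL, hLne⟩, hyL⟩
      · by_cases hyu : y = u
        · rw [hyu, (pivotEdge G u v).adj_comm,
            pivotEdge_adj_left G huv (hneLu hL₀ hx) hxv]
          exact hVL₀ x hx hxv
        · rw [hH, pivotEdge_adj_eq' huv (hneLu hL₀ hx) hxv hyu (hneKv hyK)
            (iff_of_true (hUT x (hLsub L₀ hL₀ hx) (hneLu hL₀ hx)) (hUT y (hKs hyK) hyu))
            (iff_of_true (hVL₀ x hx hxv) (hVK y hyK))]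
          exact (h9 y hyK x ⟨L₀, hL₀, hx⟩).symm
      · have hLne' : L ≠ L₀ := by simpa using hLne
        have htog := pivotEdge_adj_toggle huv (hneLu hL₀ hx) hxv
          (hneLu hL hyL) (hneLv hL hLne' hyL)
          (hUT x (hLsub L₀ hL₀ hx) (hneLu hL₀ hx))
          (hUT y (hLsub L hL hyL) (hneLu hL hyL))
          (by
            simp only [iff_iff_implies_and_implies]
            rintro ⟨hf, _⟩
            exact hVF L hL hLne' y hyL (hf (hVL₀ x hx hxv)))
        rw [hH, htog]
        constructor
        · intro h
          exact (h6 L₀ hL₀ L hL (fun hh => hLne' hh.symm)).le_bot ⟨hx, h ▸ hyL⟩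
        · exact h10 L₀ hL₀ L hL (fun hh => hLne' hh.symm) x hx y hyL
  · -- non-adjacency between distinct members
    have main : ∀ L ∈ Ls, L ≠ L₀ → ∀ x ∈ K, ∀ y ∈ L, ¬ H.Adj x y := by
      intro L hL hLne x hx y hy
      by_cases hxu : x = u
      · rw [hxu, hH, pivotEdge_adj_left G huv (hneLu hL hy) (hneLv hL hLne hy)]
        exact hVF L hL hLne y hy
      · have htog := pivotEdge_adj_toggle huv hxu (hneKv hx)
          (hneLu hL hy) (hneLv hL hLne hy)
          (hUT x (hKs hx) hxu) (hUT y (hLsub L hL hy) (hneLu hL hy))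
          (by
            simp only [iff_iff_implies_and_implies]
            rintro ⟨hf, _⟩
            exact hVF L hL hLne y hy (hf (hVK x hx)))
        rw [hH, htog]
        rintro ⟨-, hnadj⟩
        exact hnadj (h9 x hx y ⟨L, hL, hy⟩)
    rintro L₁ (rfl | ⟨hL₁, hL₁ne⟩) L₂ (rfl | ⟨hL₂, hL₂ne⟩) hne x hx y hy
    · exact absurd rfl hne
    · exact main L₂ hL₂ (by simpa using hL₂ne) x hx y hy
    · intro hadj
      exact main L₁ hL₁ (by simpa using hL₁ne) y hy x hx hadj.symm
    · have hL₁ne' : L₁ ≠ L₀ := by simpa using hL₁ne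
      have hL₂ne' : L₂ ≠ L₀ := by simpa using hL₂ne
      rw [hH, pivotEdge_adj_eq' huv (hneLu hL₁ hx) (hneLv hL₁ hL₁ne' hx)
          (hneLu hL₂ hy) (hneLv hL₂ hL₂ne' hy)
          (iff_of_true (hUT x (hLsub L₁ hL₁ hx) (hneLu hL₁ hx))
            (hUT y (hLsub L₂ hL₂ hy) (hneLu hL₂ hy)))
          (iff_of_false (hVF L₁ hL₁ hL₁ne' x hx) (hVF L₂ hL₂ hL₂ne' y hy))]
      exact h10 L₁ hL₁ L₂ hL₂ hne x hx y hy

end PivotCore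

section Assembly
variable {G : SimpleGraph V} {s : Set V} {u v : V}

lemma CSOn_pivot (hcs : CSOn G s) (hu : u ∈ s) (hv : v ∈ s) (huv : G.Adj u v) :
    CSOn (pivotEdge G u v) s := by
  rcases hcs with hc | ⟨K, Ls, h1, h2, h3, h4, h5, h6, h7, h8, h9, h10⟩
  · refine CSOn_congr_adj (pivot_adj_eq_on huv ?_) (Or.inl hc)
    intro w hw hwu hwv
    exact iff_of_true (hc u hu w hw (fun h => hwu h.symm)) (hc v hv w hw (fun h => hwv h.symm))
  · have horig : CSOn G s := Or.inr ⟨K, Ls, h1, h2, h3, h4, h5, h6, h7, h8, h9, h10⟩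
    have hus : u ∈ K ∪ ⋃₀ Ls := h4 ▸ hu
    have hvs : v ∈ K ∪ ⋃₀ Ls := h4 ▸ hv
    have hKadj : ∀ z ∈ K, ∀ w ∈ s, w ≠ z → G.Adj z w := by
      intro z hz w hw hwz
      have : w ∈ K ∪ ⋃₀ Ls := h4 ▸ hw
      rcases this with hwK | hwL
      · exact h7 z hz w hwK (fun h => hwz h.symm)
      · exact h9 z hz w hwL
    rcases hus with huK | ⟨L₁, hL₁, huL₁⟩
    · rcases hvs with hvK | ⟨L₀, hL₀, hvL₀⟩
      · -- u, v both in K : pivot is trivial on s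
        refine CSOn_congr_adj (pivot_adj_eq_on huv ?_) horig
        intro w hw hwu hwv
        exact iff_of_true (hKadj u huK w hw hwu) (hKadj v hvK w hw hwv)
      · exact CSOn_pivot_main h1 h2 h3 h4 h5 h6 h7 h8 h9 h10 huK hL₀ hvL₀ huv
    · rcases hvs with hvK | ⟨L₀, hL₀, hvL₀⟩
      · rw [pivotEdge_comm huv]
        exact CSOn_pivot_main h1 h2 h3 h4 h5 h6 h7 h8 h9 h10 hvK hL₁ huL₁ huv.symm
      · by_cases hLL : L₁ = L₀
        · -- u, v in the same leaf clique : pivot is trivial on s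
          subst hLL
          refine CSOn_congr_adj (pivot_adj_eq_on huv ?_) horig
          intro w hw hwu hwv
          have : w ∈ K ∪ ⋃₀ Ls := h4 ▸ hw
          rcases this with hwK | ⟨L₂, hL₂, hwL₂⟩
          · exact iff_of_true ((h9 w hwK u ⟨L₁, hL₁, huL₁⟩).symm)
              ((h9 w hwK v ⟨L₁, hL₁, hvL₀⟩).symm)
          · by_cases hL21 : L₂ = L₁
            · subst hL21
              exact iff_of_true (h8 L₂ hL₂ u huL₁ w hwL₂ (fun h => hwu h.symm))
                (h8 L₂ hL₂ v hvL₀ w hwL₂ (fun h => hwv h.symm))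
            · exact iff_of_false (h10 L₁ hL₁ L₂ hL₂ (fun h => hL21 h.symm) u huL₁ w hwL₂)
                (h10 L₁ hL₁ L₂ hL₂ (fun h => hL21 h.symm) v hvL₀ w hwL₂)
        · exact absurd huv (h10 L₁ hL₁ L₀ hL₀ hLL u huL₁ v hvL₀)

lemma component_closed {c : G.ConnectedComponent} {a b : V}
    (ha : a ∈ c.supp) (hab : G.Adj a b) : b ∈ c.supp := by
  rw [SimpleGraph.ConnectedComponent.mem_supp_iff] at *
  rw [← ha]
  exact SimpleGraph.ConnectedComponent.eq.mpr hab.symm.reachable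

lemma allCS_pivot (hG : ∀ c : G.ConnectedComponent, IsCliqueStar (G.induce c.supp))
    (huv : G.Adj u v) :
    ∀ c : (pivotEdge G u v).ConnectedComponent,
      IsCliqueStar ((pivotEdge G u v).induce c.supp) := by
  intro c'
  obtain ⟨c, hsupp⟩ := supp_corr (fun x y => pivot_reachable_iff huv x y) c'
  rw [isCliqueStar_induce_iff, hsupp]
  have hGc : CSOn G c.supp := (isCliqueStar_induce_iff _ _).mp (hG c)
  by_cases hu : u ∈ c.supp
  · exact CSOn_pivot hGc hu (component_closed hu huv) huv
  · refine CSOn_congr_adj (fun x hx y hy => ?_) hGc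
    have hnadj : ∀ w ∈ c.supp, ¬ G.Adj u w ∧ ¬ G.Adj v w ∧ w ≠ u ∧ w ≠ v := by
      intro w hw
      refine ⟨fun h => hu (component_closed hw h.symm), fun h => ?_, fun h => ?_, fun h => ?_⟩
      · exact hu (component_closed (component_closed hw h.symm) huv.symm)
      · exact hu (h ▸ hw)
      · exact hu (component_closed (h ▸ hw) huv.symm)
    obtain ⟨hux, hvx, hxu, hxv⟩ := hnadj x hx
    obtain ⟨huy, hvy, hyu, hyv⟩ := hnadj y hy
    exact (pivotEdge_adj_eq huv hxu hxv hyu hyv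
      (iff_of_false hux hvx) (iff_of_false huy hvy)).symm

lemma allCS_induce (hG : ∀ c : G.ConnectedComponent, IsCliqueStar (G.induce c.supp))
    (s : Set V) :
    ∀ c : (G.induce s).ConnectedComponent,
      IsCliqueStar ((G.induce s).induce c.supp) := by
  classical
  intro c'
  rw [isCliqueStar_induce_iff,
    CSOn_map (G := G) (f := (Subtype.val : s → V)) Subtype.val_injective
      (fun x y => Iff.rfl) c'.supp]
  obtain ⟨x₀, hx₀⟩ := c'.exists_rep
  set emb : G.induce s ↪g G := SimpleGraph.Embedding.induce s with hemb
  have hval : ∀ a : s, emb a = (a : V) := fun a => rfl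
  set c : G.ConnectedComponent := G.connectedComponentMk ↑x₀ with hc
  have hGc : CSOn G c.supp := (isCliqueStar_induce_iff _ _).mp (hG c)
  have hmem : ∀ z : s, z ∈ c'.supp → (G.induce s).Reachable z x₀ := by
    intro z hz
    rw [SimpleGraph.ConnectedComponent.mem_supp_iff] at hz
    exact SimpleGraph.ConnectedComponent.eq.mp (hz.trans hx₀.symm)
  have hts : (Subtype.val '' c'.supp : Set V) ⊆ c.supp := by
    rintro _ ⟨z, hz, rfl⟩
    rw [SimpleGraph.ConnectedComponent.mem_supp_iff, hc]
    refine SimpleGraph.ConnectedComponent.eq.mpr ?_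
    exact (hmem z hz).map emb.toHom
  refine CSOn_subset hGc hts ?_
  rintro _ ⟨a, ha, rfl⟩ _ ⟨b, hb, rfl⟩
  have hab : (G.induce s).Reachable a b := (hmem a ha).trans (hmem b hb).symm
  obtain ⟨w'⟩ := hab
  refine ⟨w'.map emb.toHom, ?_⟩
  intro z hz
  replace hz : z ∈ w'.support.map emb.toHom := by rw [← SimpleGraph.Walk.support_map]; exact hz
  rw [List.mem_map] at hz
  obtain ⟨z', hz', rfl⟩ := hz
  have : z' ∈ c'.supp := by
    rw [SimpleGraph.ConnectedComponent.mem_supp_iff]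
    have hr : (G.induce s).Reachable a z' := ⟨w'.takeUntil z' hz'⟩
    rw [SimpleGraph.ConnectedComponent.eq.mpr hr.symm]
    rw [SimpleGraph.ConnectedComponent.mem_supp_iff] at ha
    exact ha
  exact ⟨z', this, rfl⟩

lemma allCS_iso {W : Type*} {H : SimpleGraph W} (e : G ≃g H)
    (hG : ∀ c : G.ConnectedComponent, IsCliqueStar (G.induce c.supp)) :
    ∀ c : H.ConnectedComponent, IsCliqueStar (H.induce c.supp) := by
  intro c
  rw [isCliqueStar_induce_iff,
    CSOn_map (G := G) (f := ⇑e.symm) e.symm.injective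
      (fun x y => (e.symm.map_rel_iff).symm) c.supp]
  obtain ⟨x, hx⟩ := c.exists_rep
  have hre : ∀ a b : W, H.Reachable a b ↔ G.Reachable (e.symm a) (e.symm b) := by
    intro a b
    constructor
    · exact fun h => h.map e.symm.toHom
    · intro h
      have := h.map e.toHom
      simpa using this
  have himg : (⇑e.symm '' c.supp : Set V) = (G.connectedComponentMk (e.symm x)).supp := by
    ext z
    constructor
    · rintro ⟨y, hy, rfl⟩
      rw [SimpleGraph.ConnectedComponent.mem_supp_iff]
      rw [SimpleGraph.ConnectedComponent.mem_supp_iff] at hy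
      refine SimpleGraph.ConnectedComponent.eq.mpr ?_
      exact (hre y x).mp (SimpleGraph.ConnectedComponent.eq.mp (hy.trans hx.symm))
    · intro hz
      refine ⟨e z, ?_, by simp⟩
      rw [SimpleGraph.ConnectedComponent.mem_supp_iff] at hz ⊢
      rw [← hx]
      refine SimpleGraph.ConnectedComponent.eq.mpr ?_
      have := SimpleGraph.ConnectedComponent.eq.mp hz
      exact (hre (e z) x).mpr (by simpa using this)
  rw [himg]
  exact (isCliqueStar_induce_iff _ _).mp (hG _)

end Assembly

/-- If every connected component of `G` is a clique-star and `H`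
is a pivot-minor of `G`, then every connected component of `H` is a clique-star. -/
theorem cliqueStar_pivotMinor_closed {V : Type*} {W : Type*} [Fintype V] [Fintype W]
    (G : SimpleGraph V) (H : SimpleGraph W)
    (hG : ∀ c : G.ConnectedComponent, IsCliqueStar (G.induce c.supp))
    (hGH : HasPivotMinor G H) :
    ∀ c : H.ConnectedComponent, IsCliqueStar (H.induce c.supp) := by
  obtain ⟨s, G', hequiv, ⟨e⟩⟩ := hGH
  have key : ∀ (G₂ : SimpleGraph V), PivotEquiv G G₂ →
      ∀ c : G₂.ConnectedComponent, IsCliqueStar (G₂.induce c.supp) := by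
    intro G₂ h
    induction h with
    | refl => exact hG
    | tail _ step ih =>
        obtain ⟨u, v, huv, rfl⟩ := step
        exact allCS_pivot ih huv
  exact allCS_iso e (allCS_induce (key G' hequiv) s)
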